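/- Let X = [0,ω₁) with the order topology and let Y = [0,ω₁] with the topology in which every α < ω₁ is isolated and a set U containing ω₁ is open iff Y \ U is countable. Then the product X × Y is not star-Lindelöf (and hence not set star-Lindelöf). -/

import Mathlib

open Set TopologicalSpace

/-- The star of a set `A` with respect to a collection `U`:
`St(A,U) = ⋃ {V ∈ U : V ∩ A ≠ ∅}`. -/
def st {X : Type*} (A : Set X) (U : Set (Set X)) : Set X :=
  ⋃₀ {V | V ∈ U ∧ (V ∩ A).Nonempty}

/-- A space is set strongly star-Lindelöf if for every nonempty `A` and every collection of
open sets `U` with `closure A ⊆ ⋃₀ U`, there is a countable `F ⊆ closure A` with `A ⊆ St(F,U)`. -/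
def SetStronglyStarLindelof (X : Type*) [TopologicalSpace X] : Prop :=
  ∀ A : Set X, A.Nonempty → ∀ U : Set (Set X), (∀ V ∈ U, IsOpen V) →
    closure A ⊆ ⋃₀ U →
    ∃ F : Set X, F.Countable ∧ F ⊆ closure A ∧ A ⊆ st F U

/-- A space is set star-Lindelöf if for every nonempty `A` and every collection of open sets `U`
with `closure A ⊆ ⋃₀ U`, there is a countable `V ⊆ U` with `A ⊆ St(⋃₀ V, U)`. -/
def SetStarLindelof (X : Type*) [TopologicalSpace X] : Prop :=
  ∀ A : Set X, A.Nonempty → ∀ U : Set (Set X), (∀ V ∈ U, IsOpen V) →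
    closure A ⊆ ⋃₀ U →
    ∃ V : Set (Set X), V.Countable ∧ V ⊆ U ∧ A ⊆ st (⋃₀ V) U

/-- A space is strongly star-Lindelöf if for every open cover `U`
there is a countable `F` with `X = St(F,U)`. -/
def StronglyStarLindelof (X : Type*) [TopologicalSpace X] : Prop :=
  ∀ U : Set (Set X), (∀ V ∈ U, IsOpen V) → ⋃₀ U = univ →
    ∃ F : Set X, F.Countable ∧ st F U = univ

/-- A space is star-Lindelöf if for every open cover `U`
there is a countable `V ⊆ U` with `X = St(⋃₀ V, U)`. -/
def StarLindelof (X : Type*) [TopologicalSpace X] : Prop :=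
  ∀ U : Set (Set X), (∀ V ∈ U, IsOpen V) → ⋃₀ U = univ →
    ∃ V : Set (Set X), V.Countable ∧ V ⊆ U ∧ st (⋃₀ V) U = univ

/-- The space `[0, ω₁)` of countable ordinals. -/
abbrev Omega1 : Type _ := (Cardinal.aleph 1).ord.ToType

/-- The topology on `Y = [0, ω₁]` (here `WithTop Omega1`) in which every `α < ω₁` is isolated
and a set containing `ω₁` is open iff its complement is countable. -/
def coCountableTopAt (α : Type*) : TopologicalSpace (WithTop α) where
  IsOpen S := (⊤ : WithTop α) ∈ S → Sᶜ.Countable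
  isOpen_univ := by simp
  isOpen_inter := by
    intro s t hs ht hst
    rw [Set.compl_inter]
    exact (hs hst.1).union (ht hst.2)
  isOpen_sUnion := by
    intro s hs hmem
    obtain ⟨t, hts, hmemt⟩ := hmem
    exact ((hs t hts) hmemt).mono (compl_subset_compl.mpr (subset_sUnion_of_mem hts))

namespace NotSL

universe u v

/-- Order iso between `Iio o` and `Iio (lift o)`. -/
noncomputable def liftIio (o : Ordinal.{u}) : Set.Iio o ≃o Set.Iio (Ordinal.lift.{v} o) where
  toFun x := ⟨Ordinal.lift.{v} x.1, Ordinal.lift_lt.2 x.2⟩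
  invFun y := ⟨Classical.choose (Ordinal.lt_lift_iff.1 y.2),
    (Classical.choose_spec (Ordinal.lt_lift_iff.1 y.2)).1⟩
  left_inv x := by
    apply Subtype.ext
    have := (Classical.choose_spec (Ordinal.lt_lift_iff.1 (Ordinal.lift_lt.2 x.2 :
      Ordinal.lift.{v} x.1 < Ordinal.lift.{v} o))).2
    exact Ordinal.lift_inj.1 this
  right_inv y := by
    apply Subtype.ext
    exact (Classical.choose_spec (Ordinal.lt_lift_iff.1 y.2)).2
  map_rel_iff' := by
    intro x y
    exact Ordinal.lift_le

/-- The two incarnations of `ω₁` in different universes are order isomorphic. -/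
noncomputable def crossIso : Omega1.{v} ≃o Omega1.{u} := by
  have h : Ordinal.lift.{u} (Cardinal.aleph.{v} 1).ord
      = Ordinal.lift.{v} (Cardinal.aleph.{u} 1).ord := by
    rw [Cardinal.lift_ord, Cardinal.lift_ord, Cardinal.lift_aleph, Cardinal.lift_aleph,
      Ordinal.lift_one, Ordinal.lift_one]
  exact ((Ordinal.ToType.mk (o := _)).symm.trans
    (((liftIio _).trans ((OrderIso.setCongr _ _ (by rw [h])).trans
      (liftIio _).symm)).trans (Ordinal.ToType.mk (o := _))))

lemma countable_Iic (a : Omega1.{u}) : (Set.Iic a).Countable := by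
  have h : (Set.Iio a).Countable :=
    (Cardinal.countable_iff_lt_aleph_one _).2 (Cardinal.mk_Iio_ord_toType a)
  have he : Set.Iic a = Set.Iio a ∪ {a} := by ext x; simp [le_iff_lt_or_eq]
  rw [he]; exact h.union (countable_singleton a)

lemma uncountable_univ : ¬ (Set.univ : Set Omega1.{u}).Countable := by
  rw [Cardinal.countable_iff_lt_aleph_one, Cardinal.mk_univ, Cardinal.mk_ord_toType]
  exact lt_irrefl _

lemma exists_ub {s : Set Omega1.{u}} (hs : s.Countable) : ∃ c : Omega1.{u}, ∀ a ∈ s, a < c := by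
  by_contra hcon
  push_neg at hcon
  apply uncountable_univ.{u}
  have hsub : (Set.univ : Set Omega1.{u}) ⊆ ⋃ a ∈ s, Set.Iic a := by
    intro c _
    obtain ⟨a, ha, hca⟩ := hcon c
    exact Set.mem_biUnion ha hca
  exact ((hs.biUnion fun a _ => countable_Iic a).mono hsub)

lemma exists_nxt (a : Omega1.{u}) : ∃ d, a < d ∧ ∀ x, a < x → d ≤ x := by
  have hne : {x : Omega1.{u} | a < x}.Nonempty := by
    obtain ⟨c, hc⟩ := exists_ub (Set.countable_singleton a)
    exact ⟨c, hc a rfl⟩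
  refine ⟨(IsWellFounded.wf (r := ((· < ·) : Omega1.{u} → Omega1.{u} → Prop))).min _ hne,
    (IsWellFounded.wf).min_mem _ hne, fun x hx => ?_⟩
  exact le_of_not_gt ((IsWellFounded.wf).not_lt_min _ hx)

lemma Iic_eq_Iio (a : Omega1.{u}) : ∃ d, Set.Iic a = Set.Iio d := by
  obtain ⟨d, had, hmin⟩ := exists_nxt a
  refine ⟨d, ?_⟩
  ext x
  constructor
  · exact fun hx => lt_of_le_of_lt hx had
  · intro hx
    by_contra hax
    exact absurd (hmin x (lt_of_not_ge hax)) (not_le_of_gt hx)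

open Classical in
noncomputable def O (a : Omega1.{u}) : Set Omega1.{u} :=
  if @IsOpen Omega1.{u} (Preorder.topology Omega1.{u}) {a} then {a} else Set.Iic a

lemma mem_O (a : Omega1.{u}) : a ∈ O a := by
  unfold O; split <;> simp

lemma O_eq_of_isOpen {a : Omega1.{u}} (h : @IsOpen Omega1.{u} (Preorder.topology Omega1.{u}) {a}) :
    O a = {a} := by unfold O; rw [if_pos h]

variable (e : Omega1.{v} ≃o Omega1.{u})

def Rp (b : Omega1.{v}) : Set (Omega1.{u} × WithTop Omega1.{v}) :=
  {e b}ᶜ ×ˢ {(b : WithTop Omega1.{v})}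

def Wp (a : Omega1.{u}) : Set (Omega1.{u} × WithTop Omega1.{v}) :=
  Set.Iic a ×ˢ Set.Ioi ((e.symm a : Omega1.{v}) : WithTop Omega1.{v})

noncomputable def Sp (b : Omega1.{v}) : Set (Omega1.{u} × WithTop Omega1.{v}) :=
  O (e b) ×ˢ {(b : WithTop Omega1.{v})}

noncomputable def cov : Set (Set (Omega1.{u} × WithTop Omega1.{v})) :=
  Set.range (Rp e) ∪ Set.range (Wp e) ∪ Set.range (Sp e)

lemma Sp_injective : Function.Injective (Sp e) := by
  intro a b hab
  have ha : (e a, (a : WithTop Omega1.{v})) ∈ Sp e a := ⟨mem_O (e a), rfl⟩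
  rw [hab] at ha
  exact (WithTop.coe_inj.1 ha.2)

lemma exists_isolated {s : Set Omega1.{u}} (hs : s.Countable) :
    ∃ c, c ∉ s ∧ @IsOpen Omega1.{u} (Preorder.topology Omega1.{u}) {c} := by
  letI : TopologicalSpace Omega1.{u} := Preorder.topology Omega1.{u}
  haveI : OrderTopology Omega1.{u} := ⟨rfl⟩
  obtain ⟨b, hb⟩ := exists_ub hs
  obtain ⟨c, hbc, hcmin⟩ := exists_nxt b
  obtain ⟨d, hcd, hdmin⟩ := exists_nxt c
  refine ⟨c, fun hc => (not_lt_of_gt (hb c hc)) hbc, ?_⟩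
  · have he : ({c} : Set Omega1.{u}) = Set.Ioi b ∩ Set.Iio d := by
      ext x
      simp only [Set.mem_singleton_iff, Set.mem_inter_iff, Set.mem_Ioi, Set.mem_Iio]
      constructor
      · rintro rfl; exact ⟨hbc, hcd⟩
      · rintro ⟨h1, h2⟩
        exact le_antisymm
          (by by_contra hcx; exact absurd (hdmin x (lt_of_not_ge hcx)) (not_le_of_gt h2))
          (hcmin x h1)
    rw [he]
    exact isOpen_Ioi.inter isOpen_Iio

lemma isOpen_O (a : Omega1.{u}) : @IsOpen Omega1.{u} (Preorder.topology Omega1.{u}) (O a) := by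
  letI : TopologicalSpace Omega1.{u} := Preorder.topology Omega1.{u}
  haveI : OrderTopology Omega1.{u} := ⟨rfl⟩
  unfold O
  split
  · assumption
  · obtain ⟨d, hd⟩ := Iic_eq_Iio a
    rw [hd]; exact isOpen_Iio

lemma isOpen_Y_singleton (b : Omega1.{v}) :
    @IsOpen (WithTop Omega1.{v}) (coCountableTopAt Omega1.{v}) {(b : WithTop Omega1.{v})} := by
  intro h
  simp at h

lemma isOpen_Y_Ioi (b : Omega1.{v}) :
    @IsOpen (WithTop Omega1.{v}) (coCountableTopAt Omega1.{v})
      (Set.Ioi (b : WithTop Omega1.{v})) := by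
  intro _
  rw [Set.compl_Ioi]
  have hsub : Set.Iic (b : WithTop Omega1.{v})
      ⊆ (fun x : Omega1.{v} => (x : WithTop Omega1.{v})) '' Set.Iic b := by
    intro y hy
    induction y using WithTop.recTopCoe with
    | top => exact absurd hy (by simp)
    | coe z => exact ⟨z, WithTop.coe_le_coe.1 hy, rfl⟩
  exact ((countable_Iic b).image _).mono hsub

end NotSL

open NotSL

/-- With `X = [0, ω₁)` carrying the order topology and `Y = [0, ω₁]` as above, the product
`X × Y` is not star-Lindelöf. -/
theorem product_not_starLindelof :
    ¬ @StarLindelof (Omega1 × WithTop Omega1)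
      (@instTopologicalSpaceProd Omega1 (WithTop Omega1)
        (Preorder.topology Omega1) (coCountableTopAt Omega1)) := by
  letI tX : TopologicalSpace Omega1 := Preorder.topology Omega1
  haveI : OrderTopology Omega1 := ⟨rfl⟩
  letI tY : TopologicalSpace (WithTop Omega1) := coCountableTopAt Omega1
  intro h
  set e := crossIso with he_def
  have hopen : ∀ Z ∈ cov e, IsOpen Z := by
    rintro Z ((⟨b, rfl⟩ | ⟨a, rfl⟩) | ⟨b, rfl⟩)
    · exact (isClosed_singleton.isOpen_compl).prod (isOpen_Y_singleton b)
    · obtain ⟨d, hd⟩ := Iic_eq_Iio a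
      exact (hd ▸ isOpen_Iio).prod (isOpen_Y_Ioi (e.symm a))
    · exact (isOpen_O (e b)).prod (isOpen_Y_singleton b)
  have hcover : ⋃₀ cov e = univ := by
    ext p
    obtain ⟨x, y⟩ := p
    simp only [Set.mem_univ, iff_true, Set.mem_sUnion]
    induction y using WithTop.recTopCoe with
    | top =>
      exact ⟨Wp e x, Or.inl (Or.inr ⟨x, rfl⟩), le_refl x, WithTop.coe_lt_top _⟩
    | coe b =>
      by_cases hxb : x = e b
      · exact ⟨Sp e b, Or.inr ⟨b, rfl⟩, hxb ▸ mem_O (e b), rfl⟩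
      · exact ⟨Rp e b, Or.inl (Or.inl ⟨b, rfl⟩), hxb, rfl⟩
  obtain ⟨V, hVc, hVU, hstar⟩ := h (cov e) hopen hcover
  have hI : (Sp e ⁻¹' V).Countable := hVc.preimage (Sp_injective e)
  obtain ⟨c, hcJ, hco⟩ := exists_isolated (hI.image e)
  set b₀ := e.symm c with hb₀
  have hec : e b₀ = c := e.apply_symm_apply c
  have hSpV : Sp e b₀ ∉ V := fun hmem => hcJ ⟨b₀, hmem, hec⟩
  -- the only member of cov containing (c, ↑b₀) is Sp e b₀
  have huniq : ∀ Z ∈ cov e, (c, (b₀ : WithTop Omega1)) ∈ Z → Z = Sp e b₀ := by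
    rintro Z ((⟨b, rfl⟩ | ⟨a, rfl⟩) | ⟨b, rfl⟩) hm
    · exfalso
      have hb : b = b₀ := (WithTop.coe_inj.1 (Set.mem_singleton_iff.1 hm.2)).symm
      apply hm.1
      show (c, (b₀ : WithTop Omega1)).1 ∈ {e b}
      rw [Set.mem_singleton_iff, hb, hec]
    · exfalso
      have h2 : e.symm a < b₀ := WithTop.coe_lt_coe.1 hm.2
      rw [hb₀] at h2
      exact absurd hm.1 (not_le_of_gt (e.symm.lt_iff_lt.1 h2))
    · have hb : b = b₀ := (WithTop.coe_inj.1 (Set.mem_singleton_iff.1 hm.2)).symm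
      rw [hb]
  have hp : (c, (b₀ : WithTop Omega1)) ∈ st (⋃₀ V) (cov e) := by
    rw [hstar]; exact Set.mem_univ _
  obtain ⟨Z, ⟨hZcov, hZne⟩, hpZ⟩ := hp
  have hZ : Z = Sp e b₀ := huniq Z hZcov hpZ
  subst hZ
  obtain ⟨q, hq1, hq2⟩ := hZne
  have hOc : O (e b₀) = {c} := by rw [hec]; exact O_eq_of_isOpen hco
  have hq : q = (c, (b₀ : WithTop Omega1)) := by
    have h1 : q.1 = c := by
      have := hq1.1; rwa [hOc, Set.mem_singleton_iff] at this
    exact Prod.ext h1 hq1.2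
  rw [hq] at hq2
  obtain ⟨Z', hZ'V, hpZ'⟩ := hq2
  have hZ'eq : Z' = Sp e b₀ := huniq Z' (hVU hZ'V) hpZ'
  subst hZ'eq
  exact hSpV hZ'V
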